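/- If f is a distance-two coloring of a graph G with colors {1,...,q} and h is a graceful coloring of the complete graph K_q on vertex set {1,...,q}, then the composition h ∘ f is a graceful coloring of G. -/

import Mathlib

open SimpleGraph

/-- A graceful coloring: proper, and differences at each vertex pairwise distinct. -/
def IsGraceful {V : Type*} (G : SimpleGraph V) (f : V → ℕ) : Prop :=
  (∀ ⦃u v⦄, G.Adj u v → f u ≠ f v) ∧
  ∀ ⦃v u w⦄, G.Adj v u → G.Adj v w → u ≠ w →
    ((f v : ℤ) - f u).natAbs ≠ ((f v : ℤ) - f w).natAbs

/-- A graceful `k`-coloring: graceful with colors in `{1,…,k}`. -/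
def IsGracefulK {V : Type*} (G : SimpleGraph V) (k : ℕ) (f : V → ℕ) : Prop :=
  IsGraceful G f ∧ ∀ v, f v ∈ Finset.Icc 1 k

/-- The graceful chromatic number. -/
noncomputable def gracefulChromatic {V : Type*} (G : SimpleGraph V) : ℕ :=
  sInf {k | ∃ f : V → ℕ, IsGracefulK G k f}

/-- The square of a graph: vertices adjacent iff at distance at most 2. -/
def squareGraph {V : Type*} (G : SimpleGraph V) : SimpleGraph V where
  Adj u v := u ≠ v ∧ (G.Adj u v ∨ ∃ w, G.Adj u w ∧ G.Adj w v)
  symm := by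
    constructor
    rintro u v ⟨hne, h | ⟨w, h1, h2⟩⟩
    · exact ⟨hne.symm, Or.inl h.symm⟩
    · exact ⟨hne.symm, Or.inr ⟨w, h2.symm, h1.symm⟩⟩
  loopless := by constructor; rintro u ⟨hne, -⟩; exact hne rfl

/-- A set of naturals is AP-free: no three distinct elements `i, j, l` with `|i-j| = |j-l|`. -/
def APFree (S : Finset ℕ) : Prop :=
  ∀ i ∈ S, ∀ j ∈ S, ∀ l ∈ S, i ≠ j → j ≠ l → i ≠ l →
    ((i : ℤ) - j).natAbs ≠ ((j : ℤ) - l).natAbs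

/-- OEIS A065825: least `k` such that `{1,…,k}` contains an AP-free `n`-element subset. -/
noncomputable def A (n : ℕ) : ℕ :=
  sInf {k | ∃ S ⊆ Finset.Icc 1 k, S.card = n ∧ APFree S}

/-- The complete graph on vertex set `{1,…,q} ⊆ ℕ` (other naturals isolated). -/
def Kq (q : ℕ) : SimpleGraph ℕ where
  Adj a b := a ≠ b ∧ a ∈ Finset.Icc 1 q ∧ b ∈ Finset.Icc 1 q
  symm := by constructor; rintro a b ⟨h, h1, h2⟩; exact ⟨h.symm, h2, h1⟩
  loopless := by constructor; rintro a ⟨h, -⟩; exact h rfl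

theorem stmt3 {V : Type*} (G : SimpleGraph V) (q : ℕ) (f : V → ℕ)
    (hrange : ∀ v, f v ∈ Finset.Icc 1 q)
    (hd2 : ∀ u v : V, u ≠ v → (G.Adj u v ∨ ∃ w, G.Adj u w ∧ G.Adj w v) → f u ≠ f v)
    (h : ℕ → ℕ) (hh : IsGraceful (Kq q) h) :
    IsGraceful G (h ∘ f) := by
  constructor
  · intro u v huv
    exact hh.1 ⟨hd2 u v huv.ne (Or.inl huv), hrange u, hrange v⟩
  · intro v u w hvu hvw huw
    have hfu : f v ≠ f u := hd2 v u hvu.ne (Or.inl hvu)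
    have hfw : f v ≠ f w := hd2 v w hvw.ne (Or.inl hvw)
    have hfuw : f u ≠ f w := hd2 u w huw (Or.inr ⟨v, hvu.symm, hvw⟩)
    exact hh.2 ⟨hfu, hrange v, hrange u⟩ ⟨hfw, hrange v, hrange w⟩ hfuw
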